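/- There exists a function F̃ : (−1,1) × ℝ → ℝ that is real analytic (jointly in both variables) such that: (1) for all w ∈ (−1,1) with w ≠ 0 and all u ≠ 0, F̃(w,u) = w·( u/(1 − ((1−w)/(1+w))^u) − u/2 ); (2) F̃(−w,u) = F̃(w,u) for all (w,u), i.e. F̃ is even in w; and (3) F̃(w,−u) = F̃(w,u) for all (w,u), i.e. F̃ is even in u. -/

import Mathlib

open Real Filter

/-- Real log is analytic at positive points. -/
lemma analyticAt_rlog {x : ℝ} (hx : 0 < x) : AnalyticAt ℝ Real.log x := by
  have h1 : AnalyticAt ℂ Complex.log (x : ℂ) :=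
    analyticAt_clog (Complex.ofReal_mem_slitPlane.2 hx)
  have h2 : AnalyticAt ℝ (fun y : ℝ => Complex.log (y : ℂ)) x :=
    h1.restrictScalars.comp (Complex.ofRealCLM.analyticAt x)
  have h3 : AnalyticAt ℝ (fun y : ℝ => (Complex.log (y : ℂ)).re) x :=
    (Complex.reCLM.analyticAt _).comp h2
  apply h3.congr
  filter_upwards [eventually_gt_nhds hx] with y hy
  rw [← Complex.ofReal_log hy.le, Complex.ofReal_re]

lemma analyticAt_rsinh (x : ℝ) : AnalyticAt ℝ Real.sinh x := by
  have h : AnalyticAt ℝ (fun y : ℝ => (Real.exp y - Real.exp (-y)) / 2) x := by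
    exact ((analyticAt_rexp).sub ((analyticAt_rexp).comp analyticAt_id.neg)).div
      analyticAt_const two_ne_zero
  exact h.congr (Eventually.of_forall fun y => (Real.sinh_eq y).symm)

lemma analyticAt_rcosh (x : ℝ) : AnalyticAt ℝ Real.cosh x := by
  have h : AnalyticAt ℝ (fun y : ℝ => (Real.exp y + Real.exp (-y)) / 2) x := by
    exact ((analyticAt_rexp).add ((analyticAt_rexp).comp analyticAt_id.neg)).div
      analyticAt_const two_ne_zero
  exact h.congr (Eventually.of_forall fun y => (Real.cosh_eq y).symm)

lemma analyticAt_dslope_self {f : ℝ → ℝ} {a : ℝ} (hf : AnalyticAt ℝ f a) :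
    AnalyticAt ℝ (dslope f a) a := by
  obtain ⟨p, hp⟩ := hf
  exact ⟨p.fslope, hp.has_fpower_series_dslope_fslope⟩

lemma analyticAt_dslope_of_ne {f : ℝ → ℝ} {a x : ℝ} (hf : AnalyticAt ℝ f x) (hx : x ≠ a) :
    AnalyticAt ℝ (dslope f a) x := by
  have h : AnalyticAt ℝ (fun y => (f y - f a) / (y - a)) x :=
    (hf.sub analyticAt_const).div (analyticAt_id.sub analyticAt_const) (sub_ne_zero.2 hx)
  apply h.congr
  filter_upwards [eventually_ne_nhds hx] with y hy
  rw [dslope_of_ne _ hy, slope_def_field]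

noncomputable def Lf : ℝ → ℝ := fun w => Real.log (1 + w) - Real.log (1 - w)

lemma Lf_zero : Lf 0 = 0 := by simp [Lf]

lemma Lf_neg (w : ℝ) : Lf (-w) = -Lf w := by
  unfold Lf
  rw [show (1 : ℝ) + -w = 1 - w by ring, show (1 : ℝ) - -w = 1 + w by ring]
  ring

lemma Lf_ne_zero {w : ℝ} (h1 : -1 < w) (h2 : w < 1) (hw : w ≠ 0) : Lf w ≠ 0 := by
  rcases hw.lt_or_gt with h | h
  · have : Real.log (1 + w) < Real.log (1 - w) :=
      Real.log_lt_log (by linarith) (by linarith)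
    unfold Lf; linarith
  · have : Real.log (1 - w) < Real.log (1 + w) :=
      Real.log_lt_log (by linarith) (by linarith)
    unfold Lf; linarith

lemma analyticAt_Lf {w : ℝ} (h1 : -1 < w) (h2 : w < 1) : AnalyticAt ℝ Lf w := by
  have ha : AnalyticAt ℝ (fun w : ℝ => Real.log (1 + w)) w :=
    (analyticAt_rlog (by linarith)).comp (analyticAt_const.add analyticAt_id)
  have hb : AnalyticAt ℝ (fun w : ℝ => Real.log (1 - w)) w :=
    (analyticAt_rlog (by linarith)).comp (analyticAt_const.sub analyticAt_id)
  exact ha.sub hb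

lemma dslope_Lf_of_ne {w : ℝ} (hw : w ≠ 0) : dslope Lf 0 w = Lf w / w := by
  rw [dslope_of_ne _ hw, slope_def_field, Lf_zero, sub_zero, sub_zero]

lemma deriv_Lf_zero : deriv Lf 0 = 2 := by
  have ha : HasDerivAt (fun w : ℝ => 1 + w) 1 0 := by
    simpa using (hasDerivAt_id (0 : ℝ)).const_add 1
  have hb : HasDerivAt (fun w : ℝ => 1 - w) (-1) 0 := by
    simpa using (hasDerivAt_id (0 : ℝ)).const_sub 1
  have h1 : HasDerivAt (fun w : ℝ => Real.log (1 + w)) (1 / (1 + 0)) 0 :=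
    ha.log (by norm_num)
  have h2 : HasDerivAt (fun w : ℝ => Real.log (1 - w)) (-1 / (1 - 0)) 0 :=
    hb.log (by norm_num)
  have h : HasDerivAt Lf (1 / (1 + 0) - -1 / (1 - 0)) 0 := h1.sub h2
  rw [h.deriv]; norm_num

lemma dslope_Lf_ne_zero {w : ℝ} (h1 : -1 < w) (h2 : w < 1) : dslope Lf 0 w ≠ 0 := by
  by_cases hw : w = 0
  · subst hw
    rw [dslope_same, deriv_Lf_zero]; norm_num
  · rw [dslope_Lf_of_ne hw]
    exact div_ne_zero (Lf_ne_zero h1 h2 hw) hw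

lemma dslope_Lf_neg {w : ℝ} : dslope Lf 0 (-w) = dslope Lf 0 w := by
  by_cases hw : w = 0
  · subst hw; simp
  · rw [dslope_Lf_of_ne hw, dslope_Lf_of_ne (neg_ne_zero.2 hw), Lf_neg, neg_div_neg_eq]

lemma dslope_sinh_of_ne {s : ℝ} (hs : s ≠ 0) : dslope Real.sinh 0 s = Real.sinh s / s := by
  rw [dslope_of_ne _ hs, slope_def_field, Real.sinh_zero, sub_zero, sub_zero]

lemma dslope_sinh_ne_zero (s : ℝ) : dslope Real.sinh 0 s ≠ 0 := by
  by_cases hs : s = 0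
  · subst hs
    rw [dslope_same, Real.deriv_sinh, Real.cosh_zero]; norm_num
  · rw [dslope_sinh_of_ne hs]
    exact div_ne_zero (Real.sinh_ne_zero.2 hs) hs

lemma dslope_sinh_neg (s : ℝ) : dslope Real.sinh 0 (-s) = dslope Real.sinh 0 s := by
  by_cases hs : s = 0
  · subst hs; simp
  · rw [dslope_sinh_of_ne hs, dslope_sinh_of_ne (neg_ne_zero.2 hs), Real.sinh_neg, neg_div_neg_eq]

noncomputable def Hf : ℝ → ℝ := fun s => Real.cosh s / dslope Real.sinh 0 s

lemma Hf_neg (s : ℝ) : Hf (-s) = Hf s := by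
  unfold Hf; rw [Real.cosh_neg, dslope_sinh_neg]

lemma analyticAt_Hf (s : ℝ) : AnalyticAt ℝ Hf s := by
  have hd : AnalyticAt ℝ (dslope Real.sinh 0) s := by
    by_cases hs : s = 0
    · subst hs; exact analyticAt_dslope_self (analyticAt_rsinh 0)
    · exact analyticAt_dslope_of_ne (analyticAt_rsinh s) hs
  exact (analyticAt_rcosh s).div hd (dslope_sinh_ne_zero s)

noncomputable def Ff : ℝ × ℝ → ℝ := fun p => (dslope Lf 0 p.1)⁻¹ * Hf (p.2 * Lf p.1 / 2)

lemma analyticAt_dslope_Lf {w : ℝ} (h1 : -1 < w) (h2 : w < 1) :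
    AnalyticAt ℝ (dslope Lf 0) w := by
  by_cases hw : w = 0
  · subst hw; exact analyticAt_dslope_self (analyticAt_Lf (by norm_num) (by norm_num))
  · exact analyticAt_dslope_of_ne (analyticAt_Lf h1 h2) hw

lemma Ff_analytic : AnalyticOnNhd ℝ Ff {p : ℝ × ℝ | -1 < p.1 ∧ p.1 < 1} := by
  rintro p ⟨h1, h2⟩
  have hL : AnalyticAt ℝ (fun q : ℝ × ℝ => Lf q.1) p :=
    (analyticAt_Lf h1 h2).comp analyticAt_fst
  have hd : AnalyticAt ℝ (fun q : ℝ × ℝ => dslope Lf 0 q.1) p :=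
    (analyticAt_dslope_Lf h1 h2).comp analyticAt_fst
  have harg : AnalyticAt ℝ (fun q : ℝ × ℝ => q.2 * Lf q.1 / 2) p :=
    (analyticAt_snd.mul hL).div analyticAt_const two_ne_zero
  exact (hd.inv (dslope_Lf_ne_zero h1 h2)).mul ((analyticAt_Hf _).comp harg)

lemma Ff_even_w (w u : ℝ) : Ff (-w, u) = Ff (w, u) := by
  show (dslope Lf 0 (-w))⁻¹ * Hf (u * Lf (-w) / 2) = _
  rw [dslope_Lf_neg, Lf_neg, show u * -Lf w / 2 = -(u * Lf w / 2) by ring, Hf_neg]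
  rfl

lemma Ff_even_u (w u : ℝ) : Ff (w, -u) = Ff (w, u) := by
  show (dslope Lf 0 w)⁻¹ * Hf (-u * Lf w / 2) = _
  rw [show -u * Lf w / 2 = -(u * Lf w / 2) by ring, Hf_neg]
  rfl

lemma alg_key (w u L e s : ℝ) (hw : w ≠ 0) (hL : L ≠ 0) (hs : s = u * L / 2) (hs0 : s ≠ 0)
    (he : e ≠ 0) (d1 : e - e⁻¹ ≠ 0) :
    (L / w)⁻¹ * ((e + e⁻¹) / 2 / ((e - e⁻¹) / 2 / s)) = w * (u / (1 - e⁻¹ * e⁻¹) - u / 2) := by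
  subst hs
  have h21 : e ^ 2 - 1 ≠ 0 := by
    intro h
    apply d1
    have : e - e⁻¹ = (e ^ 2 - 1) / e := by field_simp
    rw [this, h, zero_div]
  rw [show e + e⁻¹ = (e ^ 2 + 1) / e by field_simp,
    show e - e⁻¹ = (e ^ 2 - 1) / e by field_simp,
    show (1 : ℝ) - e⁻¹ * e⁻¹ = (e ^ 2 - 1) / e ^ 2 by field_simp]
  field_simp
  ring

lemma Ff_formula {w u : ℝ} (h1 : -1 < w) (h2 : w < 1) (hw : w ≠ 0) (hu : u ≠ 0) :
    Ff (w, u) = w * (u / (1 - ((1 - w) / (1 + w)) ^ u) - u / 2) := by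
  have h1w : (0:ℝ) < 1 + w := by linarith
  have h2w : (0:ℝ) < 1 - w := by linarith
  have hLw : Lf w ≠ 0 := Lf_ne_zero h1 h2 hw
  set s := u * Lf w / 2 with hs
  have hs0 : s ≠ 0 := div_ne_zero (mul_ne_zero hu hLw) two_ne_zero
  have hr : ((1 - w) / (1 + w) : ℝ) ^ u = Real.exp (-s + -s) := by
    rw [Real.rpow_def_of_pos (div_pos h2w h1w), Real.log_div (ne_of_gt h2w) (ne_of_gt h1w)]
    congr 1
    rw [hs]; unfold Lf; ring
  have he : Real.exp s ≠ 0 := Real.exp_ne_zero s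
  have d1 : Real.exp s - (Real.exp s)⁻¹ ≠ 0 := by
    rw [← Real.exp_neg]
    refine sub_ne_zero.2 fun h => hs0 ?_
    have := Real.exp_eq_exp.1 h
    linarith
  have d2 : 1 - Real.exp (-s + -s) ≠ 0 := by
    refine sub_ne_zero.2 fun h => hs0 ?_
    have := (Real.exp_eq_one_iff _).1 h.symm
    linarith
  show (dslope Lf 0 w)⁻¹ * Hf s = _
  rw [hr]
  unfold Hf
  rw [dslope_Lf_of_ne hw, dslope_sinh_of_ne hs0, Real.cosh_eq, Real.sinh_eq, Real.exp_neg,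
    show Real.exp (-s + -s) = (Real.exp s)⁻¹ * (Real.exp s)⁻¹ by
      rw [← Real.exp_neg, ← Real.exp_add]]
  exact alg_key w u (Lf w) (Real.exp s) s hw hLw hs hs0 he d1


/-- (Lemma 5.4, parts 1–2 and analyticity.)  There is a function
`F̃ : (−1,1) × ℝ → ℝ`, real analytic jointly in both variables, with
`F̃(w,u) = w·(u/(1 − ((1−w)/(1+w))^u) − u/2)` for `w ≠ 0`, `u ≠ 0`, which is even in `w`
and even in `u`.  (Here `x ^ u` is the real power `Real.rpow`.) -/
theorem statement_5 :
    ∃ F : ℝ × ℝ → ℝ,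
      AnalyticOnNhd ℝ F {p : ℝ × ℝ | -1 < p.1 ∧ p.1 < 1} ∧
      (∀ w u : ℝ, -1 < w → w < 1 → w ≠ 0 → u ≠ 0 →
        F (w, u) = w * (u / (1 - ((1 - w) / (1 + w)) ^ u) - u / 2)) ∧
      (∀ w u : ℝ, -1 < w → w < 1 → F (-w, u) = F (w, u)) ∧
      (∀ w u : ℝ, -1 < w → w < 1 → F (w, -u) = F (w, u)) := by
  exact ⟨Ff, Ff_analytic, fun w u h1 h2 hw hu => Ff_formula h1 h2 hw hu,
    fun w u _ _ => Ff_even_w w u, fun w u _ _ => Ff_even_u w u⟩
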